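/- Let μ be a rotation-invariant probability measure supported on the closed unit ball B₁(0) ⊂ ℝ^m (m ≥ 2) with a density p(x) that is strictly radially decreasing: p(x₁) > p(x₂) whenever ‖x₁‖ < ‖x₂‖. Let c ∈ ℝ^m and z ∈ B₁(c) with z ≠ c, and suppose B₁(z) ∩ B₁(c) has positive measure under the translate μ_c := μ(· − c). Then ∫_{B₁(z) ∩ B₁(c)} (d(z, x) − d(c, x)) dμ_c(x) > 0. -/

import Mathlib

open MeasureTheory Metric Set RealInnerProductSpace NNReal ENNReal

/-- Let `μ` be a rotation-invariant probability measure on the closed unit ball of `ℝ^m`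
(`m ≥ 2`) with density `p` (w.r.t. Lebesgue measure) vanishing outside the ball and
strictly radially decreasing. Let `c ∈ ℝ^m`, `z ∈ B₁(c)` with `z ≠ c`, and suppose
`B₁(z) ∩ B₁(c)` has positive measure under the translate `μ_c` of `μ` by `c`. Then
`∫_{B₁(z) ∩ B₁(c)} (d(z,x) − d(c,x)) dμ_c(x) > 0`. -/
theorem stmt19 (m : ℕ) (hm : 2 ≤ m)
    (μ : Measure (EuclideanSpace ℝ (Fin m))) [IsProbabilityMeasure μ]
    (p : EuclideanSpace ℝ (Fin m) → ℝ)
    (hdens : μ = volume.withDensity fun x => ENNReal.ofReal (p x))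
    (hout : ∀ x : EuclideanSpace ℝ (Fin m), 1 < ‖x‖ → p x = 0)
    (hdec : ∀ x₁ x₂ : EuclideanSpace ℝ (Fin m),
      ‖x₁‖ ≤ 1 → ‖x₂‖ ≤ 1 → ‖x₁‖ < ‖x₂‖ → p x₂ < p x₁)
    (hrot : ∀ R : EuclideanSpace ℝ (Fin m) ≃ₗᵢ[ℝ] EuclideanSpace ℝ (Fin m),
      μ.map R = μ)
    (c z : EuclideanSpace ℝ (Fin m)) (hz : z ∈ closedBall c 1) (hzc : z ≠ c)
    (hposmeas :
      0 < (μ.map (fun x => x + c)) (closedBall z 1 ∩ closedBall c 1)) :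
    0 < ∫ x in closedBall z 1 ∩ closedBall c 1,
        (dist z x - dist c x) ∂(μ.map (fun x => x + c)) := by
  classical
  haveI : Nontrivial (EuclideanSpace ℝ (Fin m)) := nontrivial_of_ne z c hzc
  set w : EuclideanSpace ℝ (Fin m) := z - c with hwdef
  have hw0 : w ≠ 0 := sub_ne_zero.mpr hzc
  have hw0' : (0:ℝ) < ‖w‖ := norm_pos_iff.mpr hw0
  set q : EuclideanSpace ℝ (Fin m) → ℝ := fun y => max (p y) 0 with hqdef
  have hq0 : ∀ y, 0 ≤ q y := fun y => le_max_right _ _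
  have hqto : ∀ y, (ENNReal.ofReal (p y)).toReal = q y := by
    intro y
    rcases le_total 0 (p y) with h | h
    · rw [ENNReal.toReal_ofReal h]; simp [hqdef, max_eq_left h]
    · rw [ENNReal.ofReal_of_nonpos h]
      simp [hqdef, max_eq_right h]
  have hqp : ∀ y, 0 < q y → p y = q y := by
    intro y hy
    rcases le_or_gt (p y) 0 with h | h
    · simp [hqdef, max_eq_right h] at hy
    · simp [hqdef, max_eq_left h.le]
  -- `q` (hence the density) is null-measurable, by radial monotonicity.
  have key : ∀ t : ℝ, NullMeasurableSet (q ⁻¹' Ioi t)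
      (volume : Measure (EuclideanSpace ℝ (Fin m))) := by
    intro t
    rcases lt_or_ge t 0 with ht | ht
    · have : q ⁻¹' Ioi t = univ :=
        eq_univ_of_forall fun y => lt_of_lt_of_le ht (hq0 y)
      rw [this]; exact nullMeasurableSet_univ
    · set S := q ⁻¹' Ioi t with hS
      rcases eq_empty_or_nonempty S with h | h
      · rw [h]; exact nullMeasurableSet_empty
      have hSp : ∀ x ∈ S, t < p x := by
        intro x hx
        have hx' : t < q x := hx
        rcases le_or_gt (p x) 0 with h' | h'
        · have h0 : q x = 0 := max_eq_right h'
          exfalso; rw [h0] at hx'; exact absurd hx' (not_lt.mpr ht)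
        · have h0 : q x = p x := max_eq_left h'.le
          rwa [h0] at hx'
      have hS1 : ∀ x ∈ S, ‖x‖ ≤ 1 := by
        intro x hx
        by_contra h'
        have h1 := hout x (lt_of_not_ge h')
        have h2 := hSp x hx
        rw [h1] at h2
        exact absurd h2 (not_lt.mpr ht)
      set r := sSup (norm '' S) with hr
      have hbdd : BddAbove (norm '' S) :=
        ⟨1, by rintro _ ⟨x, hx, rfl⟩; exact hS1 x hx⟩
      have hne : (norm '' S).Nonempty := h.image _
      have hsub1 : ball (0 : EuclideanSpace ℝ (Fin m)) r ⊆ S := by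
        intro y hy
        have hyr : ‖y‖ < r := by simpa [mem_ball_zero_iff] using hy
        obtain ⟨_, ⟨x, hx, rfl⟩, hlt⟩ := exists_lt_of_lt_csSup hne hyr
        have h1 : ‖y‖ ≤ 1 := le_of_lt (lt_of_lt_of_le hlt (hS1 x hx))
        have h2 : p x < p y := hdec y x h1 (hS1 x hx) hlt
        have h3 : t < p y := lt_trans (hSp x hx) h2
        show t < q y
        exact lt_of_lt_of_le h3 (le_max_left _ _)
      have hsub2 : S ⊆ closedBall (0 : EuclideanSpace ℝ (Fin m)) r := by
        intro x hx
        rw [mem_closedBall_zero_iff]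
        exact le_csSup hbdd ⟨x, hx, rfl⟩
      have hdiff : volume (S \ ball (0 : EuclideanSpace ℝ (Fin m)) r) = 0 := by
        refine measure_mono_null ?_
          (Measure.addHaar_sphere (volume : Measure (EuclideanSpace ℝ (Fin m))) 0 r)
        intro x hx
        have h1 : ‖x‖ ≤ r := mem_closedBall_zero_iff.mp (hsub2 hx.1)
        have h2 : ¬ ‖x‖ < r := by simpa [mem_ball_zero_iff] using hx.2
        rw [mem_sphere_zero_iff_norm]
        exact le_antisymm h1 (not_lt.mp h2)
      have hSeq : S = ball (0 : EuclideanSpace ℝ (Fin m)) r ∪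
          (S \ ball (0 : EuclideanSpace ℝ (Fin m)) r) :=
        (union_diff_cancel hsub1).symm
      rw [hSeq]
      exact measurableSet_ball.nullMeasurableSet.union (NullMeasurableSet.of_null hdiff)
  have hqnm : NullMeasurable q (volume : Measure (EuclideanSpace ℝ (Fin m))) := by
    intro s hs
    exact (measurable_of_Ioi
      (δ := NullMeasurableSpace (EuclideanSpace ℝ (Fin m)) volume) (f := q)
      (fun t => key t)) hs
  have hqae : AEMeasurable q (volume : Measure (EuclideanSpace ℝ (Fin m))) :=
    hqnm.aemeasurable
  have hρae : AEMeasurable (fun y => ENNReal.ofReal (p y))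
      (volume : Measure (EuclideanSpace ℝ (Fin m))) := by
    have heq : (fun y => ENNReal.ofReal (p y)) = fun y => ENNReal.ofReal (q y) := by
      funext y
      rcases le_total 0 (p y) with h | h
      · simp [hqdef, max_eq_left h]
      · simp [hqdef, max_eq_right h, ENNReal.ofReal_of_nonpos h]
    rw [heq]
    exact ENNReal.measurable_ofReal.comp_aemeasurable hqae
  have hfnn : AEMeasurable (fun y => (p y).toNNReal)
      (volume : Measure (EuclideanSpace ℝ (Fin m))) := by
    have heq : (fun y : EuclideanSpace ℝ (Fin m) => (p y).toNNReal)
        = fun y => (q y).toNNReal := by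
      funext y
      rcases le_total 0 (p y) with h | h
      · simp [hqdef, max_eq_left h]
      · simp [hqdef, max_eq_right h, Real.toNNReal_of_nonpos h]
    rw [heq]
    exact measurable_real_toNNReal.comp_aemeasurable hqae
  -- `q` is integrable.
  have hlint : ∫⁻ y, ENNReal.ofReal (p y)
      ∂(volume : Measure (EuclideanSpace ℝ (Fin m))) ≠ ⊤ := by
    have h1 : μ univ = 1 := measure_univ
    rw [hdens, withDensity_apply _ MeasurableSet.univ, Measure.restrict_univ] at h1
    rw [h1]; exact ENNReal.one_ne_top
  have hqint : Integrable q (volume : Measure (EuclideanSpace ℝ (Fin m))) := by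
    have h := integrable_toReal_of_lintegral_ne_top hρae hlint
    exact h.congr (Filter.Eventually.of_forall hqto)
  -- the sets
  set A : Set (EuclideanSpace ℝ (Fin m)) := closedBall z 1 ∩ closedBall c 1 with hA
  set B : Set (EuclideanSpace ℝ (Fin m)) :=
    closedBall w 1 ∩ closedBall (0 : EuclideanSpace ℝ (Fin m)) 1 with hB
  have hAmeas : MeasurableSet A := measurableSet_closedBall.inter measurableSet_closedBall
  have hBmeas : MeasurableSet B := measurableSet_closedBall.inter measurableSet_closedBall
  have hpre : (fun y => y + c) ⁻¹' A = B := by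
    ext y
    have e1 : y + c - z = y - w := by rw [hwdef]; abel
    simp only [hA, hB, mem_preimage, mem_inter_iff, mem_closedBall, dist_eq_norm,
      add_sub_cancel_right, sub_zero, e1]
  have hB1 : ∀ y ∈ B, ‖y‖ ≤ 1 := by
    intro y hy
    simpa [mem_closedBall_zero_iff] using hy.2
  have hB2 : ∀ y ∈ B, ‖w - y‖ ≤ 1 := by
    intro y hy
    have h1 := hy.1
    rw [mem_closedBall, dist_eq_norm] at h1
    rwa [← norm_neg, neg_sub]
  have hBf : ∀ y ∈ B, w - y ∈ B := by
    intro y hy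
    constructor
    · rw [mem_closedBall, dist_eq_norm]
      simpa [_root_.sub_sub_cancel] using hB1 y hy
    · rw [mem_closedBall_zero_iff]
      exact hB2 y hy
  -- the function g
  set g : EuclideanSpace ℝ (Fin m) → ℝ := fun y => ‖w - y‖ - ‖y‖ with hgdef
  have hgcont : Continuous g := ((continuous_const.sub continuous_id).norm).sub continuous_norm
  have hgf : ∀ y, g (w - y) = - g y := by
    intro y
    simp only [hgdef, _root_.sub_sub_cancel]
    ring
  have hgbd : ∀ y, |g y| ≤ ‖w‖ := by
    intro y
    have h1 : |‖w - y‖ - ‖(-y : EuclideanSpace ℝ (Fin m))‖| ≤ ‖(w - y) - (-y)‖ :=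
      abs_norm_sub_norm_le _ _
    rw [norm_neg] at h1
    have h2 : (w - y) - (-y) = w := by abel
    rw [h2] at h1
    simpa [hgdef] using h1
  -- Step 1: change variables x = y + c.
  have hmapstep :
      ∫ x in A, (dist z x - dist c x) ∂(μ.map (fun x => x + c))
        = ∫ y in B, g y ∂μ := by
    have hcont : Continuous fun x : EuclideanSpace ℝ (Fin m) => dist z x - dist c x :=
      (continuous_const.dist continuous_id).sub (continuous_const.dist continuous_id)
    rw [setIntegral_map hAmeas hcont.aestronglyMeasurable
      (measurable_add_const c).aemeasurable, hpre]
    refine integral_congr_ae (Filter.Eventually.of_forall fun y => ?_)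
    have e1 : z - (y + c) = w - y := by rw [hwdef]; abel
    have e2 : c - (y + c) = -y := by abel
    simp only [dist_eq_norm, e1, e2, norm_neg, hgdef]
  -- Step 2: express via the density.
  have hdstep : ∫ y in B, g y ∂μ
      = ∫ y in B, q y * g y ∂(volume : Measure (EuclideanSpace ℝ (Fin m))) := by
    rw [hdens]
    rw [show (fun x => ENNReal.ofReal (p x))
        = (fun x => ((((fun y => (p y).toNNReal) x : NNReal)) : ENNReal)) from rfl]
    rw [setIntegral_withDensity_eq_setIntegral_smul₀ hfnn.restrict g hBmeas]
    refine integral_congr_ae (Filter.Eventually.of_forall fun y => ?_)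
    simp only [NNReal.smul_def, Real.coe_toNNReal', hqdef, smul_eq_mul]
  -- positivity of μ on B
  have hposB : 0 < μ B := by
    rwa [Measure.map_apply (measurable_add_const c) hAmeas, hpre] at hposmeas
  have hposQ : volume ({y | 0 < q y} ∩ B) ≠ 0 := by
    intro h0
    have hae : (fun y => ENNReal.ofReal (p y)) =ᵐ[volume.restrict B]
        (0 : EuclideanSpace ℝ (Fin m) → ℝ≥0∞) := by
      rw [Filter.EventuallyEq, ae_iff]
      have hsub : {y | ¬ (fun y => ENNReal.ofReal (p y)) y
          = (0 : EuclideanSpace ℝ (Fin m) → ℝ≥0∞) y} ⊆ {y | 0 < q y} := by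
        intro y hy
        simp only [mem_setOf_eq, Pi.zero_apply, ENNReal.ofReal_eq_zero, not_le] at hy
        exact lt_of_lt_of_le hy (le_max_left _ _)
      refine measure_mono_null hsub ?_
      rw [Measure.restrict_apply' hBmeas]
      exact h0
    have hzero : μ B = 0 := by
      rw [hdens, withDensity_apply _ hBmeas]
      calc ∫⁻ y in B, ENNReal.ofReal (p y) ∂volume
          = ∫⁻ y in B, 0 ∂volume := lintegral_congr_ae hae
        _ = 0 := lintegral_zero
    rw [hzero] at hposB
    exact lt_irrefl _ hposB
  -- the bisector hyperplane is null
  have hH : volume {y : EuclideanSpace ℝ (Fin m) | g y = 0} = 0 := by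
    set y₀ : EuclideanSpace ℝ (Fin m) := (1/2 : ℝ) • w with hy₀
    set K : Submodule ℝ (EuclideanSpace ℝ (Fin m)) := LinearMap.ker ((innerSL ℝ w : EuclideanSpace ℝ (Fin m) →L[ℝ] ℝ) : EuclideanSpace ℝ (Fin m) →ₗ[ℝ] ℝ) with hK
    have hKne : K ≠ ⊤ := by
      intro htop
      have hw : w ∈ K := htop ▸ Submodule.mem_top
      have hw' : ⟪w, w⟫ = 0 := hw
      rw [real_inner_self_eq_norm_sq] at hw'
      nlinarith [hw0']
    have hKnull : volume (K : Set (EuclideanSpace ℝ (Fin m))) = 0 :=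
      Measure.addHaar_submodule volume K hKne
    have hsub : {y : EuclideanSpace ℝ (Fin m) | g y = 0}
        ⊆ (fun x => -y₀ + x) ⁻¹' (K : Set (EuclideanSpace ℝ (Fin m))) := by
      intro y hy
      have hy' : ‖w - y‖ = ‖y‖ := by
        have := hy
        simp only [mem_setOf_eq, hgdef, sub_eq_zero] at this
        exact this
      have h2 : ‖w - y‖ ^ 2 = ‖y‖ ^ 2 := by rw [hy']
      rw [norm_sub_sq_real] at h2
      have h3 : ⟪w, y⟫ = ‖w‖ ^ 2 / 2 := by linarith
      show -y₀ + y ∈ K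
      rw [hK, LinearMap.mem_ker]
      show ⟪w, -y₀ + y⟫ = 0
      rw [inner_add_right, inner_neg_right, hy₀, real_inner_smul_right,
        real_inner_self_eq_norm_sq, h3]
      ring
    refine measure_mono_null hsub ?_
    rw [measure_preimage_add]
    exact hKnull
  -- the reflection y ↦ w - y
  have hmp : MeasurePreserving (fun y : EuclideanSpace ℝ (Fin m) => w - y)
      (volume : Measure (EuclideanSpace ℝ (Fin m))) volume :=
    Measure.measurePreserving_sub_left volume w
  have hemb : MeasurableEmbedding (fun y : EuclideanSpace ℝ (Fin m) => w - y) :=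
    (MeasurableEquiv.subLeft w).measurableEmbedding
  have hfB : (fun y : EuclideanSpace ℝ (Fin m) => w - y) ⁻¹' B = B := by
    ext y
    simp only [mem_preimage]
    constructor
    · intro hy
      have h1 := hBf (w - y) hy
      simpa [_root_.sub_sub_cancel] using h1
    · exact hBf y
  -- integrability
  have hmul : ∀ u : EuclideanSpace ℝ (Fin m) → ℝ,
      Integrable u (volume.restrict B) →
      Integrable (fun y => u y * g y) (volume.restrict B) := by
    intro u hu
    have h1 : Integrable (fun y => g y * u y) (volume.restrict B) :=
      hu.bdd_mul hgcont.aestronglyMeasurable.restrict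
        (Filter.Eventually.of_forall fun y => by simpa [Real.norm_eq_abs] using hgbd y)
    exact h1.congr (Filter.Eventually.of_forall fun y => mul_comm _ _)
  have hIint : IntegrableOn (fun y => q y * g y) B volume := hmul q hqint.restrict
  have hqfint : Integrable (fun y => q (w - y))
      (volume : Measure (EuclideanSpace ℝ (Fin m))) :=
    (hmp.integrable_comp_emb hemb).mpr hqint
  have hJint : IntegrableOn (fun y => q (w - y) * g y) B volume :=
    hmul _ hqfint.restrict
  -- symmetrization
  have hJI : ∫ y in B, q (w - y) * g y ∂(volume : Measure (EuclideanSpace ℝ (Fin m)))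
      = - ∫ y in B, q y * g y ∂(volume : Measure (EuclideanSpace ℝ (Fin m))) := by
    have h0 := hmp.setIntegral_preimage_emb hemb (fun y => q y * g y) B
    rw [hfB] at h0
    rw [← h0, ← integral_neg]
    refine integral_congr_ae (Filter.Eventually.of_forall fun y => ?_)
    show q (w - y) * g y = -(q (w - y) * g (w - y))
    rw [hgf y]; ring
  set F : EuclideanSpace ℝ (Fin m) → ℝ := fun y => (q y - q (w - y)) * g y with hF
  have hFeq : ∀ y, F y = q y * g y - q (w - y) * g y := fun y => by rw [hF]; ring
  have hFint : IntegrableOn F B volume :=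
    (hIint.sub hJint).congr (Filter.Eventually.of_forall fun y => (hFeq y).symm)
  have hF0 : ∀ y ∈ B, 0 ≤ F y := by
    intro y hy
    rcases lt_trichotomy (g y) 0 with h | h | h
    · have hlt : ‖w - y‖ < ‖y‖ := by
        have h' := h; simp only [hgdef] at h'; linarith
      have hp : p y < p (w - y) := hdec (w - y) y (hB2 y hy) (hB1 y hy) hlt
      have hqle : q y ≤ q (w - y) := max_le_max (le_of_lt hp) le_rfl
      have h1 : q y - q (w - y) ≤ 0 := sub_nonpos.mpr hqle
      show 0 ≤ (q y - q (w - y)) * g y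
      nlinarith [h1, h.le]
    · rw [hF]; simp [h]
    · have hlt : ‖y‖ < ‖w - y‖ := by
        have h' := h; simp only [hgdef] at h'; linarith
      have hp : p (w - y) < p y := hdec y (w - y) (hB1 y hy) (hB2 y hy) hlt
      have hqle : q (w - y) ≤ q y := max_le_max (le_of_lt hp) le_rfl
      rw [hF]
      exact mul_nonneg (sub_nonneg.mpr hqle) (le_of_lt h)
  have hFpos : ∀ y ∈ B, 0 < q y → g y ≠ 0 → 0 < F y := by
    intro y hy hqy hg
    rcases lt_or_gt_of_ne hg with h | h
    · have hlt : ‖w - y‖ < ‖y‖ := by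
        have h' := h; simp only [hgdef] at h'; linarith
      have hp : p y < p (w - y) := hdec (w - y) y (hB2 y hy) (hB1 y hy) hlt
      have hpy : p y = q y := hqp y hqy
      have hq2 : q y < q (w - y) := by
        have h1 : q y < p (w - y) := by rw [← hpy]; exact hp
        exact lt_of_lt_of_le h1 (le_max_left _ _)
      rw [hF]
      exact mul_pos_of_neg_of_neg (sub_neg.mpr hq2) h
    · have hlt : ‖y‖ < ‖w - y‖ := by
        have h' := h; simp only [hgdef] at h'; linarith
      have hp : p (w - y) < p y := hdec y (w - y) (hB1 y hy) (hB2 y hy) hlt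
      have hpy : p y = q y := hqp y hqy
      have hq2 : q (w - y) < q y := by
        have h1 : p (w - y) < q y := by rw [← hpy]; exact hp
        exact max_lt h1 hqy
      rw [hF]
      exact mul_pos (sub_pos.mpr hq2) h
  -- the good set has positive measure
  have hgood : 0 < volume (({y | 0 < q y} ∩ B) \ {y | g y = 0}) := by
    rw [measure_diff_null hH]
    exact lt_of_le_of_ne zero_le (Ne.symm hposQ)
  have h2I : 0 < ∫ y in B, F y ∂(volume : Measure (EuclideanSpace ℝ (Fin m))) := by
    rw [setIntegral_pos_iff_support_of_nonneg_ae
      ((ae_restrict_iff' hBmeas).mpr (Filter.Eventually.of_forall hF0)) hFint]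
    refine lt_of_lt_of_le hgood (measure_mono ?_)
    rintro y ⟨⟨hqy, hyB⟩, hgy⟩
    exact ⟨ne_of_gt (hFpos y hyB hqy (by simpa using hgy)), hyB⟩
  have hIJ : ∫ y in B, F y ∂(volume : Measure (EuclideanSpace ℝ (Fin m)))
      = (∫ y in B, q y * g y ∂(volume : Measure (EuclideanSpace ℝ (Fin m))))
        - ∫ y in B, q (w - y) * g y ∂(volume : Measure (EuclideanSpace ℝ (Fin m))) := by
    rw [← integral_sub hIint hJint]
    exact integral_congr_ae (Filter.Eventually.of_forall fun y => hFeq y)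
  rw [hmapstep, hdstep]
  rw [hIJ, hJI] at h2I
  linarith
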